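/- For every x ∈ {1, …, L}: e^{iθ/2} a_x Φ_{G,0} = η e^{−iθ/2} b_x† Φ_{G,0}, and e^{iθ/2} a_x Φ_{G,1} = η e^{−iθ/2} b_x† Φ_{G,1} + δ_{x,L} √(2η sin δ) e^{iθ/2} Φ_{G,0}. -/

import Mathlib

section Aux
variable {R : Type*} [Ring R] [Algebra ℂ R]

omit [Algebra ℂ R] in
lemma zz_prod_mem_eq_zero (e : ℕ → R) (S : Finset ℕ)
    (hanti : ∀ i ∈ S, ∀ j ∈ S, e i * e j = -(e j * e i))
    (hsq : ∀ i ∈ S, e i * e i = 0) :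
    ∀ (l : List ℕ), (∀ i ∈ l, i ∈ S) → ∀ x ∈ S, x ∈ l → e x * (l.map e).prod = 0 := by
  intro l
  induction l with
  | nil => simp
  | cons y ys ih =>
    intro hmem x hxS hxl
    simp only [List.map_cons, List.prod_cons]
    rcases List.mem_cons.mp hxl with rfl | hx
    · rw [← mul_assoc, hsq x hxS, zero_mul]
    · rw [← mul_assoc, hanti x hxS y (hmem y (by simp)), neg_mul, mul_assoc,
        ih (fun i hi => hmem i (List.mem_cons_of_mem _ hi)) x hxS hx, mul_zero, neg_zero]

omit [Algebra ℂ R] in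
lemma zz_prod_dup_eq_zero (e : ℕ → R) (S : Finset ℕ)
    (hanti : ∀ i ∈ S, ∀ j ∈ S, e i * e j = -(e j * e i))
    (hsq : ∀ i ∈ S, e i * e i = 0) :
    ∀ (l : List ℕ), (∀ i ∈ l, i ∈ S) → ¬ l.Nodup → (l.map e).prod = 0 := by
  intro l
  induction l with
  | nil => intro _ h; exact absurd List.nodup_nil h
  | cons y ys ih =>
    intro hmem hnd
    simp only [List.nodup_cons, not_and_or, not_not] at hnd
    simp only [List.map_cons, List.prod_cons]
    rcases hnd with h | h
    · exact zz_prod_mem_eq_zero e S hanti hsq ys (fun i hi => hmem i (List.mem_cons_of_mem _ hi))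
        y (hmem y (by simp)) h
    · rw [ih (fun i hi => hmem i (List.mem_cons_of_mem _ hi)) h, mul_zero]

/-- products of `k` creation operators -/
def zzProdSet (e : ℕ → R) (S : Finset ℕ) (k : ℕ) : Set R :=
  {m | ∃ l : List ℕ, l.length = k ∧ (∀ i ∈ l, i ∈ S) ∧ m = (l.map e).prod}

lemma zz_mem_span_mul (e : ℕ → R) (S : Finset ℕ) {k l : ℕ} {A B : R}
    (hA : A ∈ Submodule.span ℂ (zzProdSet e S k))
    (hB : B ∈ Submodule.span ℂ (zzProdSet e S l)) :
    A * B ∈ Submodule.span ℂ (zzProdSet e S (k + l)) := by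
  have h := Submodule.mul_mem_mul hA hB
  rw [Submodule.span_mul_span] at h
  refine Submodule.span_le.mpr ?_ h
  rintro m hm
  rw [Set.mem_mul] at hm
  obtain ⟨a, ha, b, hb, rfl⟩ := hm
  obtain ⟨la, hla, hma, rfl⟩ := ha
  obtain ⟨lb, hlb, hmb, rfl⟩ := hb
  refine Submodule.subset_span ⟨la ++ lb, by simp [hla, hlb], ?_, by simp⟩
  intro i hi
  rcases List.mem_append.mp hi with h | h
  exacts [hma i h, hmb i h]

lemma zz_pow_mem (e : ℕ → R) (S : Finset ℕ) {T : R}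
    (hT : T ∈ Submodule.span ℂ (zzProdSet e S 2)) :
    ∀ n, T ^ n ∈ Submodule.span ℂ (zzProdSet e S (2 * n)) := by
  intro n
  induction n with
  | zero => exact Submodule.subset_span ⟨[], by simp⟩
  | succ n ih =>
    have h2 : 2 * (n + 1) = 2 * n + 2 := by ring
    rw [h2, pow_succ]
    exact zz_mem_span_mul e S ih hT

lemma zz_span_eq_bot (e : ℕ → R) (S : Finset ℕ)
    (hanti : ∀ i ∈ S, ∀ j ∈ S, e i * e j = -(e j * e i))
    (hsq : ∀ i ∈ S, e i * e i = 0) {k : ℕ} (hk : S.card < k) :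
    Submodule.span ℂ (zzProdSet e S k) = ⊥ := by
  rw [Submodule.span_eq_bot]
  rintro m ⟨l, hl, hmem, rfl⟩
  refine zz_prod_dup_eq_zero e S hanti hsq l hmem ?_
  intro hnd
  have h1 : l.toFinset ⊆ S := fun i hi => hmem i (List.mem_toFinset.mp hi)
  have := Finset.card_le_card h1
  rw [List.toFinset_card_of_nodup hnd, hl] at this
  omega

end Aux

noncomputable section

/-- `w_x = sin(δ/2)` for odd `x`, `cos(δ/2)` for even `x`. -/
def wR (δ : ℝ) (x : ℕ) : ℝ := if Odd x then Real.sin (δ/2) else Real.cos (δ/2)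

/-- The antisymmetric coefficient matrix `F_{x,y}`. -/
def Fc (L : ℕ) (δ : ℝ) (x y : ℕ) : ℂ :=
  if y = x + 1 ∨ (x = 1 ∧ y = L) then -(Real.sin δ) / 2
  else if x = y + 1 ∨ (x = L ∧ y = 1) then (Real.sin δ) / 2
  else 0

variable {V : Type*} [AddCommGroup V] [Module ℂ V]

/-- `a_x = w_{x+1} c_x − w_x c_{x+1}` for `1 ≤ x ≤ L−1`, and `a_L = w_2 c_1 + w_{L−1} c_L`. -/
def aOp (L : ℕ) (δ : ℝ) (c : ℕ → Module.End ℂ V) (x : ℕ) : Module.End ℂ V :=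
  if x = L then (wR δ 2 : ℂ) • c 1 + (wR δ (L-1) : ℂ) • c L
  else (wR δ (x+1) : ℂ) • c x - (wR δ x : ℂ) • c (x+1)

/-- `b_x = w_x c_x + w_{x+1} c_{x+1}` for `1 ≤ x ≤ L−1`, and `b_L = −w_1 c_1 + w_L c_L`. -/
def bOp (L : ℕ) (δ : ℝ) (c : ℕ → Module.End ℂ V) (x : ℕ) : Module.End ℂ V :=
  if x = L then (-(wR δ 1) : ℂ) • c 1 + (wR δ L : ℂ) • c L
  else (wR δ x : ℂ) • c x + (wR δ (x+1) : ℂ) • c (x+1)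

/-- `ã_x† = (1/sin δ)(Σ_{y=1}^{x} w_y c_y† − Σ_{y=x+1}^{L} w_y c_y†)` for `1 ≤ x ≤ L−1`,
and `ã_L† = (1/sin δ) Σ_{y=1}^{L} w_y c_y†`. -/
def taOp (L : ℕ) (δ : ℝ) (c : ℕ → Module.End ℂ V) (x : ℕ) : Module.End ℂ V :=
  if x = L then ((Real.sin δ : ℂ))⁻¹ • ∑ y ∈ Finset.Icc 1 L, (wR δ y : ℂ) • c y
  else ((Real.sin δ : ℂ))⁻¹ •
    (∑ y ∈ Finset.Icc 1 x, (wR δ y : ℂ) • c y - ∑ y ∈ Finset.Icc (x+1) L, (wR δ y : ℂ) • c y)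

/-- The pair operator `ζ† = Σ_{x,y=1}^{L} F_{x,y} ã_x† ã_y†`. -/
def zetaDag (L : ℕ) (δ : ℝ) (cdag : ℕ → Module.End ℂ V) : Module.End ℂ V :=
  ∑ x ∈ Finset.Icc 1 L, ∑ y ∈ Finset.Icc 1 L,
    Fc L δ x y • (taOp L δ cdag x * taOp L δ cdag y)

/-- `Φ_{G,0} = exp(−(η/2) e^{−iθ} ζ†) Φ0`.  Since `ζ†` is a quadratic expression in the `L`
creation operators, `(ζ†)^n = 0` for `2n > L`, so the exponential equals the finite sum
`Σ_{n=0}^{L} (1/n!) (−(η/2) e^{−iθ} ζ†)^n`. -/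
def PhiG0 (L : ℕ) (δ η θ : ℝ) (cdag : ℕ → Module.End ℂ V) (Φ0 : V) : V :=
  (∑ n ∈ Finset.range (L+1),
      (((-(η/2 : ℝ) : ℂ) * Complex.exp (-(θ : ℂ) * Complex.I))^n / (n.factorial : ℂ)) •
        (zetaDag L δ cdag)^n) Φ0

/-- `Φ_{G,1} = √(2η sin δ) ã_L† Φ_{G,0}`. -/
def PhiG1 (L : ℕ) (δ η θ : ℝ) (cdag : ℕ → Module.End ℂ V) (Φ0 : V) : V :=
  (Real.sqrt (2 * η * Real.sin δ) : ℂ) • taOp L δ cdag L (PhiG0 L δ η θ cdag Φ0)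

set_option maxHeartbeats 4000000 in
/-- for every `x ∈ {1,…,L}`,
`e^{iθ/2} a_x Φ_{G,0} = η e^{−iθ/2} b_x† Φ_{G,0}` and
`e^{iθ/2} a_x Φ_{G,1} = η e^{−iθ/2} b_x† Φ_{G,1} + δ_{x,L} √(2η sin δ) e^{iθ/2} Φ_{G,0}`. -/
theorem statement11 (L : ℕ) (hL3 : 3 ≤ L) (hLodd : Odd L)
    (δ : ℝ) (hδ0 : 0 < δ) (hδ1 : δ ≤ Real.pi / 2)
    (η θ : ℝ) (hη : 0 < η)
    (c cdag : ℕ → Module.End ℂ V)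
    (car_cc : ∀ x ∈ Finset.Icc 1 L, ∀ y ∈ Finset.Icc 1 L, c x * c y + c y * c x = 0)
    (car_dd : ∀ x ∈ Finset.Icc 1 L, ∀ y ∈ Finset.Icc 1 L,
      cdag x * cdag y + cdag y * cdag x = 0)
    (car_dc : ∀ x ∈ Finset.Icc 1 L, ∀ y ∈ Finset.Icc 1 L,
      cdag x * c y + c y * cdag x = if x = y then 1 else 0)
    (Φ0 : V) (hΦ0 : ∀ x ∈ Finset.Icc 1 L, c x Φ0 = 0) :
    ∀ x ∈ Finset.Icc 1 L,
      Complex.exp ((θ : ℂ) * Complex.I / 2) • aOp L δ c x (PhiG0 L δ η θ cdag Φ0)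
        = ((η : ℂ) * Complex.exp (-(θ : ℂ) * Complex.I / 2)) •
            bOp L δ cdag x (PhiG0 L δ η θ cdag Φ0)
      ∧ Complex.exp ((θ : ℂ) * Complex.I / 2) • aOp L δ c x (PhiG1 L δ η θ cdag Φ0)
        = ((η : ℂ) * Complex.exp (-(θ : ℂ) * Complex.I / 2)) •
            bOp L δ cdag x (PhiG1 L δ η θ cdag Φ0)
          + ((if x = L then (1 : ℂ) else 0) * (Real.sqrt (2 * η * Real.sin δ) : ℂ)
              * Complex.exp ((θ : ℂ) * Complex.I / 2)) • PhiG0 L δ η θ cdag Φ0 := by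
  -- basic scalars
  have hπ : δ < Real.pi := lt_of_le_of_lt hδ1 (by linarith [Real.pi_pos])
  have hs0 : 0 < Real.sin δ := Real.sin_pos_of_pos_of_lt_pi hδ0 hπ
  set s : ℝ := Real.sin δ with hs_def
  have hsC : (s : ℂ) ≠ 0 := by exact_mod_cast ne_of_gt hs0
  set W : ℕ → ℂ := fun u => ((wR δ u : ℝ) : ℂ) with hW_def
  have hWW : ∀ u : ℕ, W u * W (u+1) = (s : ℂ)/2 := by
    intro u
    have h2 : s = 2 * (Real.sin (δ/2) * Real.cos (δ/2)) := by
      have := Real.sin_two_mul (δ/2)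
      rw [hs_def]; rw [show δ = 2 * (δ/2) by ring, this]; ring
    rcases Nat.even_or_odd u with he | ho
    · have h1 : ¬ Odd u := Nat.not_odd_iff_even.mpr he
      have h1' : Odd (u+1) := Even.add_one he
      simp only [hW_def, wR, if_neg h1, if_pos h1']
      push_cast [h2]; ring
    · have h1' : ¬ Odd (u+1) := by
        intro hodd
        exact Nat.not_odd_iff_even.mpr (Nat.even_add_one.mpr (Nat.not_even_iff_odd.mpr ho)) hodd
      simp only [hW_def, wR, if_pos ho, if_neg h1']
      push_cast [h2]; ring

  -- cumulative sums
  have hWfold : ∀ u : ℕ, ((wR δ u : ℝ) : ℂ) = W u := fun u => rfl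
  set G : ℕ → Module.End ℂ V := fun k => ∑ y ∈ Finset.Ioc 0 k, W y • cdag y with hG_def
  have hGfold : ∀ k : ℕ, (∑ v ∈ Finset.Ioc 0 k, W v • cdag v) = G k := fun k => rfl
  have hIoc : ∀ k : ℕ, Finset.Icc 1 k = Finset.Ioc 0 k := fun k => Finset.Icc_add_one_left_eq_Ioc 0 k
  have hmemIcc : ∀ u, u ∈ Finset.Icc 1 L ↔ (1 ≤ u ∧ u ≤ L) := fun u => Finset.mem_Icc
  -- taOp in terms of G
  have htaL : taOp L δ cdag L = ((s:ℂ))⁻¹ • G L := by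
    rw [taOp, if_pos rfl, hIoc]
  have hta : ∀ y, y < L → taOp L δ cdag y = ((s:ℂ))⁻¹ • ((2:ℂ) • G y - G L) := by
    intro y hy
    have hsplit : G y + ∑ v ∈ Finset.Ioc y L, W v • cdag v = G L :=
      Finset.sum_Ioc_consecutive _ (Nat.zero_le y) (le_of_lt hy)
    rw [taOp, if_neg (by omega), hIoc,
      show Finset.Icc (y+1) L = Finset.Ioc y L from Finset.Icc_add_one_left_eq_Ioc y L]
    simp only [hWfold, hGfold]
    rw [← hsplit, two_smul]
    congr 1
    abel
  -- bOp in terms of G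
  have hb : ∀ x, 1 ≤ x → x < L → bOp L δ cdag x = G (x+1) - G (x-1) := by
    intro x h1 h2
    have hsplit : G (x-1) + ∑ v ∈ Finset.Ioc (x-1) (x+1), W v • cdag v = G (x+1) :=
      Finset.sum_Ioc_consecutive _ (Nat.zero_le _) (by omega)
    have hpair : Finset.Ioc (x-1) (x+1) = {x, x+1} := by
      ext v
      simp only [Finset.mem_Ioc, Finset.mem_insert, Finset.mem_singleton]
      omega
    rw [bOp, if_neg (by omega), ← hsplit, hpair, Finset.sum_pair (by omega : x ≠ x+1)]
    simp only [hWfold]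
    abel
  have hbL : bOp L δ cdag L = G L - G (L-1) - G 1 := by
    have hsplit : G (L-1) + ∑ v ∈ Finset.Ioc (L-1) L, W v • cdag v = G L :=
      Finset.sum_Ioc_consecutive _ (Nat.zero_le _) (by omega)
    have h1 : Finset.Ioc (L-1) L = {L} := by
      ext v
      simp only [Finset.mem_Ioc, Finset.mem_singleton]
      omega
    have h2 : Finset.Ioc 0 1 = {1} := rfl
    rw [bOp, if_pos rfl, ← hsplit, h1, Finset.sum_singleton,
      show G 1 = ∑ v ∈ Finset.Ioc 0 1, W v • cdag v from rfl, h2, Finset.sum_singleton]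
    have hneg : (-(wR δ 1) : ℂ) • cdag 1 = -(W 1 • cdag 1) := by
      rw [← hWfold 1, neg_smul]
    rw [hneg]
    simp only [hWfold]
    abel
  -- anticommutator of c with G
  have hCG : ∀ u ∈ Finset.Icc 1 L, ∀ k, k ≤ L →
      c u * G k + G k * c u = (if u ≤ k then W u else 0) • 1 := by
    intro u hu k hk
    have h1u : 1 ≤ u := by rw [hmemIcc] at hu; omega
    rw [show G k = ∑ v ∈ Finset.Ioc 0 k, W v • cdag v from rfl]
    simp only [Finset.mul_sum, Finset.sum_mul, mul_smul_comm, smul_mul_assoc,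
      ← Finset.sum_add_distrib]
    have : ∀ v ∈ Finset.Ioc 0 k, (W v • (c u * cdag v) + W v • (cdag v * c u))
        = if v = u then W v • (1 : Module.End ℂ V) else 0 := by
      intro v hv
      have hvIcc : v ∈ Finset.Icc 1 L := by
        rw [hmemIcc]; rw [Finset.mem_Ioc] at hv; omega
      rw [← smul_add, add_comm (c u * cdag v), car_dc v hvIcc u hu]
      split_ifs with h
      · rfl
      · rw [smul_zero]
    rw [Finset.sum_congr rfl this, Finset.sum_ite_eq' (Finset.Ioc 0 k) u (fun v => W v • 1)]
    by_cases h : u ≤ k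
    · rw [if_pos (Finset.mem_Ioc.mpr ⟨h1u, h⟩), if_pos h]
    · rw [if_neg (fun hc => h (Finset.mem_Ioc.mp hc).2), if_neg h, zero_smul]
  -- anticommutator of c with taOp
  have hCta : ∀ u ∈ Finset.Icc 1 L, ∀ y ∈ Finset.Icc 1 L,
      c u * taOp L δ cdag y + taOp L δ cdag y * c u
        = ((s:ℂ)⁻¹ * (if y = L then W u
            else 2 * (if u ≤ y then W u else 0) - W u)) • 1 := by
    intro u hu y hy
    have huL : u ≤ L := ((hmemIcc u).mp hu).2
    by_cases hyL : y = L
    · rw [hyL, htaL, mul_smul_comm, smul_mul_assoc, ← smul_add, hCG u hu L le_rfl,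
        if_pos huL, if_pos rfl, smul_smul]
    · have hyLt : y < L := lt_of_le_of_ne ((hmemIcc y).mp hy).2 hyL
      have e1 := hCG u hu y (le_of_lt hyLt)
      have e2 := hCG u hu L le_rfl
      rw [if_pos huL] at e2
      rw [hta y hyLt, mul_smul_comm, smul_mul_assoc, ← smul_add]
      have hexp : c u * ((2:ℂ) • G y - G L) + ((2:ℂ) • G y - G L) * c u
          = (2:ℂ) • (c u * G y + G y * c u) - (c u * G L + G L * c u) := by
        simp only [mul_sub, sub_mul, mul_smul_comm, smul_mul_assoc, smul_add]
        abel
      rw [hexp, e1, e2, if_neg hyL, smul_smul, ← sub_smul, smul_smul]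
  -- anticommutator of aOp with taOp
  have hAta : ∀ x ∈ Finset.Icc 1 L, ∀ y ∈ Finset.Icc 1 L,
      aOp L δ c x * taOp L δ cdag y + taOp L δ cdag y * aOp L δ c x
        = (if x = y then (1:ℂ) else 0) • 1 := by
    intro x hx y hy
    have hx' := (hmemIcc x).mp hx
    have hy' := (hmemIcc y).mp hy
    have hL1 : L - 1 + 1 = L := by omega
    by_cases hxL : x = L
    · rw [hxL]
      have h1m : (1:ℕ) ∈ Finset.Icc 1 L := by rw [hmemIcc]; omega
      have hLm : L ∈ Finset.Icc 1 L := by rw [hmemIcc]; omega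
      have e1 := hCta 1 h1m y hy
      have e2 := hCta L hLm y hy
      rw [aOp, if_pos rfl]
      have hexp : ((wR δ 2 : ℝ):ℂ) • c 1 * taOp L δ cdag y
            + taOp L δ cdag y * (((wR δ 2 : ℝ):ℂ) • c 1)
            + (((wR δ (L-1) : ℝ):ℂ) • c L * taOp L δ cdag y
            + taOp L δ cdag y * (((wR δ (L-1) : ℝ):ℂ) • c L))
          = W 2 • (c 1 * taOp L δ cdag y + taOp L δ cdag y * c 1)
            + W (L-1) • (c L * taOp L δ cdag y + taOp L δ cdag y * c L) := by
        simp only [hWfold, smul_mul_assoc, mul_smul_comm, smul_add]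
      have hexp2 : (((wR δ 2 : ℝ):ℂ) • c 1 + ((wR δ (L-1) : ℝ):ℂ) • c L) * taOp L δ cdag y
            + taOp L δ cdag y * (((wR δ 2 : ℝ):ℂ) • c 1 + ((wR δ (L-1) : ℝ):ℂ) • c L)
          = ((wR δ 2 : ℝ):ℂ) • c 1 * taOp L δ cdag y
            + taOp L δ cdag y * (((wR δ 2 : ℝ):ℂ) • c 1)
            + (((wR δ (L-1) : ℝ):ℂ) • c L * taOp L δ cdag y
            + taOp L δ cdag y * (((wR δ (L-1) : ℝ):ℂ) • c L)) := by
        simp only [add_mul, mul_add]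
        abel
      rw [hexp2, hexp, e1, e2, smul_smul, smul_smul, ← add_smul]
      congr 1
      have h1 := hWW 1
      norm_num at h1
      have h2 := hWW (L-1)
      rw [hL1] at h2
      by_cases hyL : y = L
      · rw [if_pos hyL, if_pos hyL, if_pos hyL.symm]
        field_simp
        linear_combination h1 + h2
      · rw [if_neg hyL, if_neg hyL, if_pos (show (1:ℕ) ≤ y by omega),
          if_neg (show ¬ L ≤ y by omega), if_neg (show ¬ L = y from fun h => hyL h.symm)]
        linear_combination ((s:ℂ))⁻¹ * h1 - ((s:ℂ))⁻¹ * h2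
    · have hxLt : x < L := lt_of_le_of_ne hx'.2 hxL
      have hxm : x ∈ Finset.Icc 1 L := hx
      have hx1m : (x+1) ∈ Finset.Icc 1 L := by rw [hmemIcc]; omega
      have e1 := hCta x hxm y hy
      have e2 := hCta (x+1) hx1m y hy
      rw [aOp, if_neg hxL]
      have hexp2 : (((wR δ (x+1) : ℝ):ℂ) • c x - ((wR δ x : ℝ):ℂ) • c (x+1)) * taOp L δ cdag y
            + taOp L δ cdag y * (((wR δ (x+1) : ℝ):ℂ) • c x - ((wR δ x : ℝ):ℂ) • c (x+1))
          = W (x+1) • (c x * taOp L δ cdag y + taOp L δ cdag y * c x)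
            - W x • (c (x+1) * taOp L δ cdag y + taOp L δ cdag y * c (x+1)) := by
        simp only [hWfold, sub_mul, mul_sub, smul_mul_assoc, mul_smul_comm, smul_add]
        abel
      rw [hexp2, e1, e2, smul_smul, smul_smul, ← sub_smul]
      congr 1
      have hw := hWW x
      by_cases hyL : y = L
      · rw [if_pos hyL, if_pos hyL, if_neg (fun h : x = y => hxL (h.trans hyL))]
        ring
      · rw [if_neg hyL, if_neg hyL]
        by_cases hc1 : x ≤ y
        · by_cases hc2 : x + 1 ≤ y
          · rw [if_pos hc1, if_pos hc2, if_neg (by omega : ¬ x = y)]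
            ring
          · rw [if_pos hc1, if_neg hc2, if_pos (by omega : x = y)]
            field_simp
            linear_combination 2 * hw
        · rw [if_neg hc1, if_neg (by omega : ¬ x + 1 ≤ y), if_neg (by omega : ¬ x = y)]
          ring
  -- aOp kills the vacuum
  have haPhi0 : ∀ x ∈ Finset.Icc 1 L, aOp L δ c x Φ0 = 0 := by
    intro x hx
    have hx' := (hmemIcc x).mp hx
    by_cases hxL : x = L
    · rw [hxL, aOp, if_pos rfl]
      simp [LinearMap.add_apply, LinearMap.smul_apply,
        hΦ0 1 (by rw [hmemIcc]; omega), hΦ0 L (by rw [hmemIcc]; omega)]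
    · rw [aOp, if_neg hxL]
      simp [LinearMap.sub_apply, LinearMap.smul_apply, hΦ0 x hx,
        hΦ0 (x+1) (by rw [hmemIcc]; omega)]
  have hG0 : G 0 = 0 := by
    rw [show G 0 = ∑ v ∈ Finset.Ioc 0 0, W v • cdag v from rfl, Finset.Ioc_self,
      Finset.sum_empty]
  have hKb : ∀ x ∈ Finset.Icc 1 L,
      (∑ z ∈ Finset.Icc 1 L, Fc L δ x z • taOp L δ cdag z) = - bOp L δ cdag x := by
    intro x hx
    have hx' := (hmemIcc x).mp hx
    by_cases hx1 : x = 1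
    · rw [hx1]
      have hsub : ({2, L} : Finset ℕ) ⊆ Finset.Icc 1 L := by
        intro v hv
        rw [hmemIcc]
        rcases Finset.mem_insert.mp hv with rfl | hv2
        · omega
        · rw [Finset.mem_singleton] at hv2; omega
      have hzero : ∀ z ∈ Finset.Icc 1 L, z ∉ ({2, L} : Finset ℕ) →
          Fc L δ 1 z • taOp L δ cdag z = 0 := by
        intro z hz hnz
        simp only [Finset.mem_insert, Finset.mem_singleton, not_or] at hnz
        rw [hmemIcc] at hz
        rw [Fc, if_neg (by omega), if_neg (by omega)]
        exact zero_smul _ _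
      rw [← Finset.sum_subset hsub hzero, Finset.sum_pair (show (2:ℕ) ≠ L by omega)]
      have f1 : Fc L δ 1 2 = -(s:ℂ)/2 := by rw [Fc, if_pos (Or.inl rfl)]
      have f2 : Fc L δ 1 L = -(s:ℂ)/2 := by rw [Fc, if_pos (Or.inr ⟨rfl, rfl⟩)]
      rw [f1, f2, hta 2 (by omega), htaL, hb 1 (by omega) (by omega), hG0]
      match_scalars <;> (field_simp; try ring)
    · by_cases hxL : x = L
      · rw [hxL]
        have hsub : ({1, L-1} : Finset ℕ) ⊆ Finset.Icc 1 L := by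
          intro v hv
          rw [hmemIcc]
          rcases Finset.mem_insert.mp hv with rfl | hv2
          · omega
          · rw [Finset.mem_singleton] at hv2; omega
        have hzero : ∀ z ∈ Finset.Icc 1 L, z ∉ ({1, L-1} : Finset ℕ) →
            Fc L δ L z • taOp L δ cdag z = 0 := by
          intro z hz hnz
          simp only [Finset.mem_insert, Finset.mem_singleton, not_or] at hnz
          rw [hmemIcc] at hz
          rw [Fc, if_neg (by omega), if_neg (by omega)]
          exact zero_smul _ _
        rw [← Finset.sum_subset hsub hzero, Finset.sum_pair (show (1:ℕ) ≠ L-1 by omega)]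
        have f1 : Fc L δ L 1 = (s:ℂ)/2 := by
          rw [Fc, if_neg (by omega), if_pos (Or.inr ⟨rfl, rfl⟩)]
        have f2 : Fc L δ L (L-1) = (s:ℂ)/2 := by
          rw [Fc, if_neg (by omega), if_pos (Or.inl (by omega))]
        rw [f1, f2, hta 1 (by omega), hta (L-1) (by omega), hbL]
        match_scalars <;> (field_simp; try ring)
      · have hx2 : 2 ≤ x := by omega
        have hxL' : x < L := by omega
        have hsub : ({x-1, x+1} : Finset ℕ) ⊆ Finset.Icc 1 L := by
          intro v hv
          rw [hmemIcc]
          rcases Finset.mem_insert.mp hv with rfl | hv2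
          · omega
          · rw [Finset.mem_singleton] at hv2; omega
        have hzero : ∀ z ∈ Finset.Icc 1 L, z ∉ ({x-1, x+1} : Finset ℕ) →
            Fc L δ x z • taOp L δ cdag z = 0 := by
          intro z hz hnz
          simp only [Finset.mem_insert, Finset.mem_singleton, not_or] at hnz
          rw [hmemIcc] at hz
          rw [Fc, if_neg (by omega), if_neg (by omega)]
          exact zero_smul _ _
        rw [← Finset.sum_subset hsub hzero, Finset.sum_pair (show x-1 ≠ x+1 by omega)]
        have f1 : Fc L δ x (x-1) = (s:ℂ)/2 := by
          rw [Fc, if_neg (by omega), if_pos (Or.inl (by omega))]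
        have f2 : Fc L δ x (x+1) = -(s:ℂ)/2 := by
          rw [Fc, if_pos (Or.inl rfl)]
        rw [f1, f2, hta (x-1) (by omega), hb x (by omega) hxL']
        by_cases hxl1 : x + 1 = L
        · rw [hxl1, htaL, ← hxl1]
          match_scalars <;> (field_simp; try ring)
        · rw [hta (x+1) (by omega)]
          match_scalars <;> (field_simp; try ring)

  have hFanti : ∀ x ∈ Finset.Icc 1 L, ∀ y ∈ Finset.Icc 1 L, Fc L δ y x = - Fc L δ x y := by
    intro x hx y hy
    have hx' := (hmemIcc x).mp hx
    have hy' := (hmemIcc y).mp hy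
    rw [Fc, Fc]
    split_ifs <;> first | ring1 | (exfalso; omega)
  set T : Module.End ℂ V := zetaDag L δ cdag with hT_def
  have haT : ∀ x ∈ Finset.Icc 1 L,
      aOp L δ c x * T = T * aOp L δ c x + (-2:ℂ) • bOp L δ cdag x := by
    intro x hx
    have key : ∀ y ∈ Finset.Icc 1 L, ∀ z ∈ Finset.Icc 1 L,
        aOp L δ c x * (Fc L δ y z • (taOp L δ cdag y * taOp L δ cdag z))
          = (Fc L δ y z • (taOp L δ cdag y * taOp L δ cdag z)) * aOp L δ c x
            + ((Fc L δ y z * (if x = y then 1 else 0)) • taOp L δ cdag z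
            - (Fc L δ y z * (if x = z then 1 else 0)) • taOp L δ cdag y) := by
      intro y hy z hz
      have e1 : aOp L δ c x * taOp L δ cdag y
          = (if x = y then (1:ℂ) else 0) • 1 - taOp L δ cdag y * aOp L δ c x :=
        eq_sub_of_add_eq (hAta x hx y hy)
      have e2 : aOp L δ c x * taOp L δ cdag z
          = (if x = z then (1:ℂ) else 0) • 1 - taOp L δ cdag z * aOp L δ c x :=
        eq_sub_of_add_eq (hAta x hx z hz)
      rw [mul_smul_comm, ← mul_assoc, e1, sub_mul, smul_mul_assoc, one_mul, mul_assoc, e2,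
        mul_sub, mul_smul_comm, mul_one, ← mul_assoc, smul_sub, smul_sub, smul_smul,
        smul_smul, ← smul_mul_assoc]
      abel
    have expand : aOp L δ c x * T - T * aOp L δ c x
        = ∑ y ∈ Finset.Icc 1 L, ∑ z ∈ Finset.Icc 1 L,
            ((Fc L δ y z * (if x = y then 1 else 0)) • taOp L δ cdag z
             - (Fc L δ y z * (if x = z then 1 else 0)) • taOp L δ cdag y) := by
      rw [hT_def, zetaDag, Finset.mul_sum, Finset.sum_mul, ← Finset.sum_sub_distrib]
      refine Finset.sum_congr rfl fun y hy => ?_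
      rw [Finset.mul_sum, Finset.sum_mul, ← Finset.sum_sub_distrib]
      refine Finset.sum_congr rfl fun z hz => ?_
      rw [key y hy z hz]
      abel
    have hsum1 : ∑ y ∈ Finset.Icc 1 L, ∑ z ∈ Finset.Icc 1 L,
        (Fc L δ y z * (if x = y then 1 else 0)) • taOp L δ cdag z
        = ∑ z ∈ Finset.Icc 1 L, Fc L δ x z • taOp L δ cdag z := by
      have hy' : ∀ y ∈ Finset.Icc 1 L,
          (∑ z ∈ Finset.Icc 1 L, (Fc L δ y z * (if x = y then 1 else 0)) • taOp L δ cdag z)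
          = if x = y then (∑ z ∈ Finset.Icc 1 L, Fc L δ y z • taOp L δ cdag z) else 0 := by
        intro y hy
        by_cases h : x = y
        · simp only [if_pos h, mul_one]
        · simp only [if_neg h, mul_zero, zero_smul, Finset.sum_const_zero]
      rw [Finset.sum_congr rfl hy', Finset.sum_ite_eq (Finset.Icc 1 L) x _, if_pos hx]
    have hsum2 : ∑ y ∈ Finset.Icc 1 L, ∑ z ∈ Finset.Icc 1 L,
        (Fc L δ y z * (if x = z then 1 else 0)) • taOp L δ cdag y
        = ∑ y ∈ Finset.Icc 1 L, Fc L δ y x • taOp L δ cdag y := by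
      refine Finset.sum_congr rfl fun y hy => ?_
      have : ∀ z ∈ Finset.Icc 1 L, (Fc L δ y z * (if x = z then 1 else 0)) • taOp L δ cdag y
          = if x = z then Fc L δ y z • taOp L δ cdag y else 0 := by
        intro z hz
        by_cases h : x = z
        · simp only [if_pos h, mul_one]
        · simp only [if_neg h, mul_zero, zero_smul]
      rw [Finset.sum_congr rfl this, Finset.sum_ite_eq (Finset.Icc 1 L) x _, if_pos hx]
    have hneg : ∑ y ∈ Finset.Icc 1 L, Fc L δ y x • taOp L δ cdag y
        = - ∑ y ∈ Finset.Icc 1 L, Fc L δ x y • taOp L δ cdag y := by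
      rw [← Finset.sum_neg_distrib]
      exact Finset.sum_congr rfl fun y hy => by rw [hFanti x hx y hy, neg_smul]
    rw [← sub_eq_iff_eq_add', expand]
    simp only [Finset.sum_sub_distrib]
    rw [hsum1, hsum2, hneg, sub_neg_eq_add, hKb x hx]
    match_scalars
    ring
  -- creation operators pairwise anticommute and square to zero
  have hdd : ∀ i ∈ Finset.Icc 1 L, ∀ j ∈ Finset.Icc 1 L,
      cdag i * cdag j = -(cdag j * cdag i) :=
    fun i hi j hj => eq_neg_of_add_eq_zero_left (car_dd i hi j hj)
  have hsq : ∀ i ∈ Finset.Icc 1 L, cdag i * cdag i = 0 := by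
    intro i hi
    have h := car_dd i hi i hi
    have h2 : (2:ℂ) • (cdag i * cdag i) = 0 := by rw [two_smul]; exact h
    have h3 := congrArg (fun A : Module.End ℂ V => ((2:ℂ))⁻¹ • A) h2
    simp only [smul_smul, smul_zero] at h3
    norm_num at h3
    exact h3
  set Q := Submodule.span ℂ (zzProdSet cdag (Finset.Icc 1 L) 1) with hQ_def
  have hgen : ∀ u ∈ Finset.Icc 1 L, cdag u ∈ Q := by
    intro u hu
    exact Submodule.subset_span ⟨[u], rfl, by simpa using hu, by simp⟩
  have hanti1 : ∀ u ∈ Finset.Icc 1 L, ∀ B ∈ Q, cdag u * B = -(B * cdag u) := by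
    intro u hu B hB
    induction hB using Submodule.span_induction with
    | mem m hm =>
      obtain ⟨l, hl, hmem, rfl⟩ := hm
      obtain ⟨v, rfl⟩ := List.length_eq_one_iff.mp hl
      simpa using hdd u hu v (hmem v (by simp))
    | zero => simp
    | add A B hA' hB' ihA ihB => rw [mul_add, ihA, ihB, add_mul, neg_add]
    | smul a A hA' ihA => rw [mul_smul_comm, ihA, smul_neg, smul_mul_assoc]
  have hanti2 : ∀ A ∈ Q, ∀ B ∈ Q, A * B = -(B * A) := by
    intro A hA B hB
    induction hA using Submodule.span_induction with
    | mem m hm =>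
      obtain ⟨l, hl, hmem, rfl⟩ := hm
      obtain ⟨v, rfl⟩ := List.length_eq_one_iff.mp hl
      simpa using hanti1 v (hmem v (by simp)) B hB
    | zero => simp
    | add A' B' hA' hB' ihA ihB => rw [add_mul, ihA, ihB, mul_add, neg_add]
    | smul a A' hA' ihA => rw [smul_mul_assoc, ihA, smul_neg, mul_smul_comm]
  -- memberships
  have hGQ : ∀ k, k ≤ L → G k ∈ Q := by
    intro k hk
    refine Submodule.sum_mem _ fun v hv => Submodule.smul_mem _ _ (hgen v ?_)
    rw [hmemIcc]
    rw [Finset.mem_Ioc] at hv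
    omega
  have htaQ : ∀ y ∈ Finset.Icc 1 L, taOp L δ cdag y ∈ Q := by
    intro y hy
    have hy' := (hmemIcc y).mp hy
    by_cases hyL : y = L
    · rw [hyL, htaL]
      exact Submodule.smul_mem _ _ (hGQ L le_rfl)
    · rw [hta y (by omega)]
      exact Submodule.smul_mem _ _
        (sub_mem (Submodule.smul_mem _ _ (hGQ y (by omega))) (hGQ L le_rfl))
  have hbQ : ∀ x ∈ Finset.Icc 1 L, bOp L δ cdag x ∈ Q := by
    intro x hx
    have hx' := (hmemIcc x).mp hx
    by_cases hxL : x = L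
    · rw [hxL, hbL]
      exact sub_mem (sub_mem (hGQ L le_rfl) (hGQ (L-1) (by omega))) (hGQ 1 (by omega))
    · rw [hb x (by omega) (by omega)]
      exact sub_mem (hGQ (x+1) (by omega)) (hGQ (x-1) (by omega))
  -- everything in Q commutes with T
  have hQT : ∀ A ∈ Q, A * T = T * A := by
    intro A hA
    rw [hT_def, zetaDag, Finset.mul_sum, Finset.sum_mul]
    refine Finset.sum_congr rfl fun y hy => ?_
    rw [Finset.mul_sum, Finset.sum_mul]
    refine Finset.sum_congr rfl fun z hz => ?_
    rw [mul_smul_comm, smul_mul_assoc]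
    congr 1
    rw [← mul_assoc, hanti2 A hA _ (htaQ y hy), neg_mul, mul_assoc,
      hanti2 A hA _ (htaQ z hz), mul_neg, neg_neg, mul_assoc]
  have hbT : ∀ x ∈ Finset.Icc 1 L, Commute (bOp L δ cdag x) T :=
    fun x hx => hQT _ (hbQ x hx)
  -- nilpotency
  have hT2 : T ∈ Submodule.span ℂ (zzProdSet cdag (Finset.Icc 1 L) 2) := by
    rw [hT_def, zetaDag]
    refine Submodule.sum_mem _ fun y hy => Submodule.sum_mem _ fun z hz =>
      Submodule.smul_mem _ _ ?_
    have h12 := zz_mem_span_mul cdag (Finset.Icc 1 L) (htaQ y hy) (htaQ z hz)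
    exact (show (1+1) = 2 from rfl) ▸ h12
  have hTL : T ^ L = 0 := by
    have h := zz_pow_mem cdag (Finset.Icc 1 L) hT2 L
    rw [zz_span_eq_bot cdag (Finset.Icc 1 L) hdd hsq
      (by rw [Nat.card_Icc]; omega)] at h
    simpa using h
  -- the Gaussian sum operator
  set z : ℂ := ((-(η/2 : ℝ) : ℂ)) * Complex.exp (-(θ : ℂ) * Complex.I) with hz_def
  set S : Module.End ℂ V := ∑ n ∈ Finset.range (L+1), (z^n / (n.factorial : ℂ)) • T^n
    with hS_def
  have hPhi0eq : PhiG0 L δ η θ cdag Φ0 = S Φ0 := rfl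
  clear_value z S
  have hbS : ∀ x ∈ Finset.Icc 1 L, bOp L δ cdag x * S = S * bOp L δ cdag x := by
    intro x hx
    rw [hS_def, Finset.mul_sum, Finset.sum_mul]
    exact Finset.sum_congr rfl fun n _ => by
      rw [mul_smul_comm, smul_mul_assoc, ((hbT x hx).pow_right n).eq]
  have haTn : ∀ x ∈ Finset.Icc 1 L, ∀ n : ℕ,
      aOp L δ c x * T^n
        = T^n * aOp L δ c x + (n:ℂ) • (T^(n-1) * ((-2:ℂ) • bOp L δ cdag x)) := by
    intro x hx n
    induction n with
    | zero => simp
    | succ n ih =>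
      simp only [Nat.add_sub_cancel]
      have hKT : ((-2:ℂ) • bOp L δ cdag x) * T^n = T^n * ((-2:ℂ) • bOp L δ cdag x) := by
        rw [smul_mul_assoc, ((hbT x hx).pow_right n).eq, mul_smul_comm]
      have step1 : aOp L δ c x * T^(n+1)
          = (T * aOp L δ c x + (-2:ℂ) • bOp L δ cdag x) * T^n := by
        rw [pow_succ', ← mul_assoc, haT x hx]
      rw [step1, add_mul, mul_assoc, ih, mul_add, hKT, ← mul_assoc, ← pow_succ']
      have hmid : T * ((n:ℂ) • (T^(n-1) * ((-2:ℂ) • bOp L δ cdag x)))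
          = (n:ℂ) • (T^n * ((-2:ℂ) • bOp L δ cdag x)) := by
        cases n with
        | zero => simp
        | succ m =>
          simp only [Nat.add_sub_cancel]
          rw [mul_smul_comm, ← mul_assoc, ← pow_succ']
      rw [hmid]
      push_cast
      rw [add_smul, one_smul]
      abel
  have haS : ∀ x ∈ Finset.Icc 1 L,
      aOp L δ c x * S
        = ((η:ℂ) * Complex.exp (-(θ:ℂ) * Complex.I)) • (bOp L δ cdag x * S)
          + S * aOp L δ c x := by
    intro x hx
    have hsz : ∑ i ∈ Finset.range L, (z^i / (i.factorial : ℂ)) • T^i = S := by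
      rw [hS_def, Finset.sum_range_succ, hTL, smul_zero, add_zero]
    have hre : ∑ n ∈ Finset.range (L+1),
        ((z^n / (n.factorial : ℂ)) * (n:ℂ)) • (T^(n-1) * ((-2:ℂ) • bOp L δ cdag x))
        = ((η:ℂ) * Complex.exp (-(θ:ℂ) * Complex.I)) • (bOp L δ cdag x * S) := by
      rw [Finset.sum_range_succ']
      simp only [Nat.cast_zero, mul_zero, zero_smul, add_zero, Nat.add_sub_cancel]
      have hstep : ∀ i ∈ Finset.range L,
          ((z^(i+1) / (((i+1).factorial : ℕ) : ℂ)) * (((i:ℕ)+1 : ℕ):ℂ))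
              • (T^i * ((-2:ℂ) • bOp L δ cdag x))
          = z • ((z^i / (i.factorial : ℂ)) • (T^i * ((-2:ℂ) • bOp L δ cdag x))) := by
        intro i _
        rw [smul_smul]
        congr 1
        have h1 : (((i+1).factorial : ℕ) : ℂ) = (((i+1:ℕ)):ℂ) * ((i.factorial : ℕ) : ℂ) := by
          rw [Nat.factorial_succ]; push_cast; ring
        have h2 : ((i.factorial : ℕ):ℂ) ≠ 0 := Nat.cast_ne_zero.mpr (Nat.factorial_ne_zero i)
        have h3 : ((i+1:ℕ):ℂ) ≠ 0 := Nat.cast_ne_zero.mpr (by omega)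
        have h4 : ((i:ℂ) * ((i.factorial:ℕ):ℂ) + ((i.factorial:ℕ):ℂ)) ≠ 0 := by
          have he : ((i:ℂ) * ((i.factorial:ℕ):ℂ) + ((i.factorial:ℕ):ℂ))
              = (((i+1:ℕ)):ℂ) * ((i.factorial:ℕ):ℂ) := by push_cast; ring
          rw [he]
          exact mul_ne_zero h3 h2
        rw [h1, pow_succ]
        field_simp
      have hstep2 : ∀ i ∈ Finset.range L,
          (z^i / (i.factorial : ℂ)) • (T^i * ((-2:ℂ) • bOp L δ cdag x))
            = ((z^i / (i.factorial : ℂ)) • T^i) * ((-2:ℂ) • bOp L δ cdag x) :=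
        fun i _ => (smul_mul_assoc _ _ _).symm
      rw [Finset.sum_congr rfl hstep, ← Finset.smul_sum, Finset.sum_congr rfl hstep2,
        ← Finset.sum_mul, hsz, mul_smul_comm, smul_smul, ← hbS x hx]
      congr 1
      rw [hz_def]
      push_cast
      ring
    have hterm : ∀ n ∈ Finset.range (L+1),
        aOp L δ c x * ((z^n / (n.factorial:ℂ)) • T^n)
        = (z^n / (n.factorial:ℂ)) • (T^n * aOp L δ c x)
          + ((z^n / (n.factorial:ℂ)) * (n:ℂ)) • (T^(n-1) * ((-2:ℂ) • bOp L δ cdag x)) := by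
      intro n _
      rw [mul_smul_comm, haTn x hx n, smul_add, smul_smul]
    have hLse : aOp L δ c x * S
        = ∑ n ∈ Finset.range (L+1), ((z^n / (n.factorial:ℂ)) • (T^n * aOp L δ c x)
          + ((z^n / (n.factorial:ℂ)) * (n:ℂ)) • (T^(n-1) * ((-2:ℂ) • bOp L δ cdag x))) := by
      rw [hS_def, Finset.mul_sum]
      exact Finset.sum_congr rfl hterm
    have hRse : ∑ n ∈ Finset.range (L+1), (z^n / (n.factorial:ℂ)) • (T^n * aOp L δ c x)
        = S * aOp L δ c x := by
      rw [hS_def, Finset.sum_mul]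
      exact Finset.sum_congr rfl fun n _ => (smul_mul_assoc _ _ _).symm
    rw [hLse, Finset.sum_add_distrib, hre, hRse, add_comm]
  have haPhiG0 : ∀ x ∈ Finset.Icc 1 L, aOp L δ c x (PhiG0 L δ η θ cdag Φ0)
      = ((η:ℂ) * Complex.exp (-(θ:ℂ) * Complex.I)) • bOp L δ cdag x (PhiG0 L δ η θ cdag Φ0) := by
    intro x hx
    have h := congrArg (fun M : Module.End ℂ V => M Φ0) (haS x hx)
    simp only [Module.End.mul_apply, LinearMap.add_apply, LinearMap.smul_apply] at h
    rw [haPhi0 x hx, map_zero, add_zero] at h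
    rw [hPhi0eq]
    exact h
  have hexp : Complex.exp ((θ:ℂ) * Complex.I / 2) * Complex.exp (-(θ:ℂ) * Complex.I)
      = Complex.exp (-(θ:ℂ) * Complex.I / 2) := by
    rw [← Complex.exp_add]
    congr 1
    ring
  intro x hx
  have hLmem : L ∈ Finset.Icc 1 L := by rw [hmemIcc]; omega
  constructor
  · rw [haPhiG0 x hx, smul_smul]
    congr 1
    rw [← hexp]
    ring
  · -- second statement
    have hv : aOp L δ c x (taOp L δ cdag L (PhiG0 L δ η θ cdag Φ0))
        = (if x = L then (1:ℂ) else 0) • (PhiG0 L δ η θ cdag Φ0)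
          + ((η:ℂ) * Complex.exp (-(θ:ℂ) * Complex.I)) •
              (bOp L δ cdag x (taOp L δ cdag L (PhiG0 L δ η θ cdag Φ0))) := by
      have e1 : aOp L δ c x * taOp L δ cdag L
          = (if x = L then (1:ℂ) else 0) • 1 - taOp L δ cdag L * aOp L δ c x :=
        eq_sub_of_add_eq (hAta x hx L hLmem)
      have e2 : taOp L δ cdag L * bOp L δ cdag x = -(bOp L δ cdag x * taOp L δ cdag L) :=
        hanti2 _ (htaQ L hLmem) _ (hbQ x hx)
      have h0 : aOp L δ c x (taOp L δ cdag L (PhiG0 L δ η θ cdag Φ0))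
          = (aOp L δ c x * taOp L δ cdag L) (PhiG0 L δ η θ cdag Φ0) := rfl
      rw [h0, e1, LinearMap.sub_apply, LinearMap.smul_apply, Module.End.one_apply,
        Module.End.mul_apply, haPhiG0 x hx, map_smul]
      rw [show taOp L δ cdag L (bOp L δ cdag x (PhiG0 L δ η θ cdag Φ0))
          = (taOp L δ cdag L * bOp L δ cdag x) (PhiG0 L δ η θ cdag Φ0) from rfl,
        e2, LinearMap.neg_apply, Module.End.mul_apply, smul_neg, sub_neg_eq_add]
    rw [PhiG1, map_smul, map_smul, hv]
    match_scalars <;> first | ring1 | (rw [← hexp]; ring1)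










end
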